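/- The alternating-sum inclusion-exclusion over subsets of {1,…,n}: Σ_{J ⊆ [n]} (−1)^{n−|J|} c_J = c_n, where c_J is the product of Catalan numbers c_{|J_i|+1} over the connected components (maximal runs of consecutive integers) J_i of J. Equivalently, Σ_{k=0}^{n} (−1)^k Σ_{j_0+⋯+j_k = n+1, j_i > 0} c_{j_0}⋯c_{j_k} = c_n. -/
import Mathlib

open Finset

/-- Sum over compositions of `m` into `k` positive parts of products of Catalan numbers. -/
def Tcat (k m : ℕ) : ℤ :=
  ∑ j ∈ (Finset.Nat.antidiagonalTuple k m).filter (fun j => ∀ i, 1 ≤ j i),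
    ∏ i, (catalan (j i) : ℤ)

lemma Tcat_eq_zero {k m : ℕ} (h : m < k) : Tcat k m = 0 := by
  unfold Tcat
  rw [Finset.filter_false_of_mem, Finset.sum_empty]
  intro j hj hpos
  rw [Finset.Nat.mem_antidiagonalTuple] at hj
  have : (k : ℕ) ≤ ∑ i, j i := by
    calc (k : ℕ) = ∑ _i : Fin k, 1 := by simp
    _ ≤ ∑ i, j i := Finset.sum_le_sum fun i _ => hpos i
  omega

lemma Tcat_zero (m : ℕ) : Tcat 0 m = if m = 0 then 1 else 0 := by
  unfold Tcat
  rcases Nat.eq_zero_or_pos m with rfl | hm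
  · rw [if_pos rfl]
    rw [Finset.filter_true_of_mem (by intro x _ i; exact i.elim0)]
    rw [Finset.Nat.antidiagonalTuple_zero_zero]
    simp
  · rw [if_neg (by omega)]
    have : ∀ j ∈ Finset.Nat.antidiagonalTuple 0 m, ¬ (∀ i, 1 ≤ j i) := by
      intro j hj
      rw [Finset.Nat.mem_antidiagonalTuple] at hj
      simp at hj; omega
    rw [Finset.filter_false_of_mem (by intro j hj hp; exact this j hj hp), Finset.sum_empty]

lemma Tcat_succ (k m : ℕ) :
    Tcat (k + 1) m = ∑ j ∈ Finset.Icc 1 m, (catalan j : ℤ) * Tcat k (m - j) := by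
  unfold Tcat
  simp_rw [Finset.mul_sum]
  rw [Finset.sum_sigma']
  refine Finset.sum_nbij' (fun x => (⟨x 0, Fin.tail x⟩ :
      Σ _j : ℕ, Fin k → ℕ)) (fun p => Fin.cons p.1 p.2) ?_ ?_ ?_ ?_ ?_
  · intro x hx
    simp only [Finset.mem_filter, Finset.Nat.mem_antidiagonalTuple] at hx
    obtain ⟨hsum, hpos⟩ := hx
    have hsplit : x 0 + ∑ i : Fin k, Fin.tail x i = m := by
      rw [← hsum, Fin.sum_univ_succ]; rfl
    have hx0 : x 0 ≤ m := by omega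
    simp only [Finset.mem_sigma, Finset.mem_Icc, Finset.mem_filter,
      Finset.Nat.mem_antidiagonalTuple]
    exact ⟨⟨hpos 0, hx0⟩, by omega, fun i => hpos i.succ⟩
  · intro p hp
    simp only [Finset.mem_sigma, Finset.mem_Icc, Finset.mem_filter,
      Finset.Nat.mem_antidiagonalTuple] at hp
    obtain ⟨⟨h1, h2⟩, hsum, hpos⟩ := hp
    simp only [Finset.mem_filter, Finset.Nat.mem_antidiagonalTuple]
    constructor
    · rw [Fin.sum_univ_succ]
      simp only [Fin.cons_zero, Fin.cons_succ]
      omega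
    · intro i
      refine Fin.cases ?_ ?_ i
      · simpa using h1
      · intro j; simpa using hpos j
  · intro x _; exact Fin.cons_self_tail x
  · intro p _; exact Sigma.ext (by simp) (by simp [Fin.tail_cons])
  · intro x hx
    simp only
    rw [Fin.prod_univ_succ]
    rfl

lemma Tcat_main : ∀ n : ℕ,
    ∑ k ∈ Finset.range (n + 1), (-1 : ℤ) ^ k * Tcat (k + 1) (n + 1) = (catalan n : ℤ) := by
  intro n
  induction n using Nat.strong_induction_on with
  | _ n ih =>
    rw [Finset.sum_range_succ']
    have h0 : (-1 : ℤ) ^ 0 * Tcat (0 + 1) (n + 1) = (catalan (n + 1) : ℤ) := by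
      have : Tcat 1 (n + 1) = (catalan (n + 1) : ℤ) := by
        rw [Tcat_succ]
        have : ∀ j ∈ Finset.Icc 1 (n + 1), (catalan j : ℤ) * Tcat 0 (n + 1 - j)
            = if j = n + 1 then (catalan (n + 1) : ℤ) else 0 := by
          intro j hj
          simp only [Finset.mem_Icc] at hj
          rw [Tcat_zero]
          rcases eq_or_ne j (n + 1) with rfl | hne
          · simp
          · rw [if_neg (by omega), if_neg hne, mul_zero]
        rw [Finset.sum_congr rfl this, Finset.sum_ite_eq' _ (n + 1)]
        simp
      simpa using this
    rw [h0]
    have hstep : ∀ k ∈ Finset.range n, (-1 : ℤ) ^ (k + 1) * Tcat (k + 1 + 1) (n + 1)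
        = (-1 : ℤ) ^ (k + 1) * ∑ j ∈ Finset.Icc 1 (n + 1),
            (catalan j : ℤ) * Tcat (k + 1) (n + 1 - j) := by
      intro k _
      rw [Tcat_succ]
    rw [Finset.sum_congr rfl hstep]
    simp_rw [Finset.mul_sum]
    rw [Finset.sum_comm]
    have hinner : ∀ j ∈ Finset.Icc 1 (n + 1),
        (∑ k ∈ Finset.range n, (-1 : ℤ) ^ (k + 1) * ((catalan j : ℤ) * Tcat (k + 1) (n + 1 - j)))
        = if j ≤ n then -(catalan j : ℤ) * (catalan (n - j) : ℤ) else 0 := by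
      intro j hj
      simp only [Finset.mem_Icc] at hj
      rcases le_or_gt j n with hle | hgt
      · rw [if_pos hle]
        have hm : n + 1 - j = (n - j) + 1 := by omega
        have hsub : Finset.range (n - j + 1) ⊆ Finset.range n := by
          apply Finset.range_subset_range.mpr; omega
        have hext : ∑ k ∈ Finset.range n, (-1 : ℤ) ^ k * Tcat (k + 1) (n + 1 - j)
            = ∑ k ∈ Finset.range (n - j + 1), (-1 : ℤ) ^ k * Tcat (k + 1) (n + 1 - j) := by
          rw [Finset.sum_subset hsub]
          intro k _ hk
          simp only [Finset.mem_range, not_lt] at hk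
          rw [Tcat_eq_zero (by omega), mul_zero]
        have hIH : ∑ k ∈ Finset.range (n - j + 1), (-1 : ℤ) ^ k * Tcat (k + 1) ((n - j) + 1)
            = (catalan (n - j) : ℤ) := ih (n - j) (by omega)
        calc ∑ k ∈ Finset.range n, (-1 : ℤ) ^ (k + 1) * ((catalan j : ℤ) * Tcat (k + 1) (n + 1 - j))
            = -(catalan j : ℤ) * ∑ k ∈ Finset.range n, (-1 : ℤ) ^ k * Tcat (k + 1) (n + 1 - j) := by
              rw [Finset.mul_sum]; apply Finset.sum_congr rfl; intro k _; ring
          _ = -(catalan j : ℤ) * (catalan (n - j) : ℤ) := by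
              rw [hext, hm, hIH]
      · rw [if_neg (by omega)]
        apply Finset.sum_eq_zero
        intro k _
        have : n + 1 - j = 0 := by omega
        rw [this, Tcat_eq_zero (by omega), mul_zero, mul_zero]
    rw [Finset.sum_congr rfl hinner]
    have hsplit : Finset.Icc 1 (n + 1) = insert (n + 1) (Finset.Icc 1 n) := by
      ext x; simp only [Finset.mem_Icc, Finset.mem_insert]; omega
    rw [hsplit, Finset.sum_insert (by simp)]
    rw [if_neg (by omega)]
    have hIcc : ∀ j ∈ Finset.Icc 1 n, (if j ≤ n then -(catalan j : ℤ) * (catalan (n - j) : ℤ)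
        else 0) = -(catalan j : ℤ) * (catalan (n - j) : ℤ) := by
      intro j hj
      simp only [Finset.mem_Icc] at hj
      rw [if_pos hj.2]
    rw [Finset.sum_congr rfl hIcc]
    have hcat : (catalan (n + 1) : ℤ) = ∑ j ∈ Finset.range (n + 1),
        (catalan j : ℤ) * (catalan (n - j) : ℤ) := by
      rw [catalan_succ]
      push_cast
      exact (Finset.sum_range fun j => (catalan j : ℤ) * (catalan (n - j) : ℤ)).symm
    have hrange : ∑ j ∈ Finset.range (n + 1), (catalan j : ℤ) * (catalan (n - j) : ℤ)
        = (catalan n : ℤ) + ∑ j ∈ Finset.Icc 1 n, (catalan j : ℤ) * (catalan (n - j) : ℤ) := by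
      have : Finset.range (n + 1) = insert 0 (Finset.Icc 1 n) := by
        ext x; simp [Finset.mem_range, Finset.mem_Icc]; omega
      rw [this, Finset.sum_insert (by simp)]
      simp
    have hfin : ∑ j ∈ Finset.Icc 1 n, -(catalan j : ℤ) * (catalan (n - j) : ℤ)
        = -∑ j ∈ Finset.Icc 1 n, (catalan j : ℤ) * (catalan (n - j) : ℤ) := by
      rw [← Finset.sum_neg_distrib]
      apply Finset.sum_congr rfl; intro j _; ring
    rw [hfin]
    linarith [hcat, hrange]

theorem stmt9 (n : ℕ) :
    ∑ k ∈ Finset.range (n + 1), (-1 : ℤ) ^ k *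
      ∑ j ∈ (Finset.Nat.antidiagonalTuple (k + 1) (n + 1)).filter
          (fun j => ∀ i, 1 ≤ j i),
        ∏ i, (catalan (j i) : ℤ) = (catalan n : ℤ) := by
  exact Tcat_main n
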